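/- Let G be a finite simple graph with an nd-decomposition P_1, ..., P_k with every part nonempty, let T be the associated type graph on {1, ..., k}, and let 𝓘 denote the family of maximal independent sets of T. Then the chromatic number χ(G) equals the minimum of Σ_{I ∈ 𝓘} x(I) over all x : 𝓘 → ℕ satisfying: for each i with P_i inducing a clique, Σ_{I ∈ 𝓘, i ∈ I} x(I) ≥ |P_i|; and for each i with P_i inducing an independent set, Σ_{I ∈ 𝓘, i ∈ I} x(I) ≥ 1. -/

import Mathlib

/-- A set of vertices is independent if no two of its vertices are adjacent. -/
def SimpleGraph.IsIndep {V : Type*} (G : SimpleGraph V) (s : Set V) : Prop :=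
  s.Pairwise fun u v => ¬ G.Adj u v

/-- The type graph of a partition `P` of the vertices of `G`: distinct indices `i, j` are
adjacent iff all edges between `P i` and `P j` are present in `G`. -/
def typeGraph {V : Type*} (G : SimpleGraph V) {k : ℕ} (P : Fin k → Finset V) :
    SimpleGraph (Fin k) where
  Adj i j := i ≠ j ∧ ∀ u ∈ P i, ∀ v ∈ P j, G.Adj u v
  symm := by
    constructor
    intro i j h
    exact ⟨h.1.symm, fun u hu v hv => (h.2 v hv u hu).symm⟩
  loopless := by
    constructor
    intro i h
    exact h.1 rfl

open Classical in
/-- The family of maximal independent sets of a graph on `Fin k`. -/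
noncomputable def maxIndepSets {k : ℕ} (T : SimpleGraph (Fin k)) :
    Finset (Finset (Fin k)) :=
  Finset.univ.filter fun I =>
    T.IsIndep ↑I ∧ ∀ J : Finset (Fin k), T.IsIndep ↑J → I ⊆ J → I = J

/-- Every independent set extends to a maximal independent set. -/
lemma exists_maxIndep_superset {k : ℕ} (T : SimpleGraph (Fin k))
    (I : Finset (Fin k)) (hI : T.IsIndep ↑I) : ∃ J ∈ maxIndepSets T, I ⊆ J := by
  classical
  have hne : ((Finset.univ : Finset (Finset (Fin k))).filter
      (fun J : Finset (Fin k) => T.IsIndep ↑J ∧ I ⊆ J)).Nonempty :=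
    ⟨I, by simp [hI]⟩
  obtain ⟨J, hJ, hmax⟩ := Finset.exists_max_image _ Finset.card hne
  simp only [Finset.mem_filter, Finset.mem_univ, true_and] at hJ
  refine ⟨J, ?_, hJ.2⟩
  simp only [maxIndepSets, Finset.mem_filter, Finset.mem_univ, true_and]
  refine ⟨hJ.1, fun J' hJ' hsub => ?_⟩
  have hJ'mem : J' ∈ (Finset.univ : Finset (Finset (Fin k))).filter
      (fun J : Finset (Fin k) => T.IsIndep ↑J ∧ I ⊆ J) := by
    simp only [Finset.mem_filter, Finset.mem_univ, true_and]
    exact ⟨hJ', hJ.2.trans hsub⟩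
  exact Finset.eq_of_subset_of_card_le hsub (hmax J' hJ'mem)

open Classical in
lemma card_sigma_fiber {k : ℕ} (𝓘 : Finset (Finset (Fin k))) (x : Finset (Fin k) → ℕ)
    (J : {J // J ∈ 𝓘}) :
    ((Finset.univ : Finset (Σ J : {J // J ∈ 𝓘}, Fin (x J.1))).filter
      (fun a => a.1 = J)).card = x J.1 := by
  classical
  have h := Finset.card_bij (s := (Finset.univ : Finset (Fin (x J.1))))
    (t := (Finset.univ.filter (fun a : Σ J : {J // J ∈ 𝓘}, Fin (x J.1) => a.1 = J)))
    (fun t _ => (⟨J, t⟩ : Σ J : {J // J ∈ 𝓘}, Fin (x J.1)))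
    (fun t _ => by simp)
    (fun a _ b _ hab => by simpa using hab)
    (by
      rintro ⟨J', t⟩ hb
      simp only [Finset.mem_filter] at hb
      obtain ⟨-, rfl⟩ := hb
      exact ⟨t, Finset.mem_univ _, rfl⟩)
  simpa using h.symm

/-- From a proper `n`-coloring one gets a feasible covering of total weight `n`,
for any family `𝓘` such that every independent set of the type graph extends to
a member of `𝓘`. -/
lemma covering_of_coloring {V : Type*} [Fintype V] (G : SimpleGraph V)
    {k : ℕ} (P : Fin k → Finset V)
    (hne : ∀ i : Fin k, (P i).Nonempty)
    (𝓘 : Finset (Finset (Fin k)))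
    (hext : ∀ I : Finset (Fin k), (typeGraph G P).IsIndep ↑I → ∃ J ∈ 𝓘, I ⊆ J)
    (n : ℕ) (C : G.Coloring (Fin n)) :
    ∃ x : Finset (Fin k) → ℕ,
      (∀ i : Fin k, G.IsClique ↑(P i) →
        (P i).card ≤ ∑ I ∈ 𝓘.filter (fun I => i ∈ I), x I) ∧
      (∀ i : Fin k, G.IsIndep ↑(P i) →
        1 ≤ ∑ I ∈ 𝓘.filter (fun I => i ∈ I), x I) ∧
      n = ∑ I ∈ 𝓘, x I := by
  classical
  have hIcIndep : ∀ c : Fin n,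
      (typeGraph G P).IsIndep ↑(Finset.univ.filter (fun i => ∃ v ∈ P i, C v = c)) := by
    intro c i hi j hj hij hadj
    rw [Finset.mem_coe, Finset.mem_filter] at hi hj
    obtain ⟨u, hu, hcu⟩ := hi.2
    obtain ⟨v, hv, hcv⟩ := hj.2
    exact C.valid (hadj.2 u hu v hv) (hcu.trans hcv.symm)
  have hext' : ∀ c : Fin n, ∃ J ∈ 𝓘,
      Finset.univ.filter (fun i => ∃ v ∈ P i, C v = c) ⊆ J :=
    fun c => hext _ (hIcIndep c)
  choose Jc hJcmem hJcsub using hext'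
  have hfib : ∀ i : Fin k, ∑ J ∈ 𝓘.filter (fun J => i ∈ J),
      (Finset.univ.filter (fun c => Jc c = J)).card
      = (Finset.univ.filter (fun c => i ∈ Jc c)).card := by
    intro i
    rw [Finset.card_eq_sum_card_fiberwise (f := Jc)
      (t := 𝓘.filter (fun J => i ∈ J))
      (fun c hc => by
        rw [Finset.mem_coe, Finset.mem_filter] at hc ⊢
        exact ⟨hJcmem c, hc.2⟩)]
    refine Finset.sum_congr rfl fun J hJ => ?_
    congr 1
    ext c
    simp only [Finset.mem_filter, Finset.mem_univ, true_and]
    constructor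
    · intro h
      exact ⟨h ▸ (Finset.mem_filter.mp hJ).2, h⟩
    · exact fun h => h.2
  refine ⟨fun J => (Finset.univ.filter (fun c => Jc c = J)).card, ?_, ?_, ?_⟩
  · -- clique constraint
    intro i hclique
    rw [hfib i]
    refine Finset.card_le_card_of_injOn C (fun v hv => ?_) ?_
    · rw [Finset.mem_coe, Finset.mem_filter]
      refine ⟨Finset.mem_univ _, hJcsub (C v) ?_⟩
      rw [Finset.mem_filter]
      exact ⟨Finset.mem_univ _, v, hv, rfl⟩
    · intro u hu v hv huv
      by_contra hnevt
      exact C.valid (hclique hu hv hnevt) huv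
  · -- independent-set constraint
    intro i _
    rw [hfib i]
    obtain ⟨v, hv⟩ := hne i
    refine Finset.card_pos.mpr ⟨C v, ?_⟩
    rw [Finset.mem_filter]
    refine ⟨Finset.mem_univ _, hJcsub (C v) ?_⟩
    rw [Finset.mem_filter]
    exact ⟨Finset.mem_univ _, v, hv, rfl⟩
  · -- total weight
    have htot := Finset.card_eq_sum_card_fiberwise (f := Jc)
      (s := (Finset.univ : Finset (Fin n))) (t := 𝓘) (fun c _ => hJcmem c)
    rw [Finset.card_univ, Fintype.card_fin] at htot
    exact htot

/-- From a feasible covering of total weight `m` one gets a proper `m`-coloring,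
for any family `𝓘` of independent sets of the type graph. -/
lemma colorable_of_covering {V : Type*} [Fintype V] (G : SimpleGraph V)
    {k : ℕ} (P : Fin k → Finset V)
    (hpart : ∀ v : V, ∃! i : Fin k, v ∈ P i)
    (hcliqueIndep : ∀ i : Fin k, G.IsClique ↑(P i) ∨ G.IsIndep ↑(P i))
    (hhom : ∀ i j : Fin k, i ≠ j →
      (∀ u ∈ P i, ∀ v ∈ P j, G.Adj u v) ∨ (∀ u ∈ P i, ∀ v ∈ P j, ¬ G.Adj u v))
    (𝓘 : Finset (Finset (Fin k)))
    (hind : ∀ J ∈ 𝓘, (typeGraph G P).IsIndep ↑J)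
    (x : Finset (Fin k) → ℕ)
    (hcl : ∀ i : Fin k, G.IsClique ↑(P i) →
      (P i).card ≤ ∑ I ∈ 𝓘.filter (fun I => i ∈ I), x I)
    (hidp : ∀ i : Fin k, G.IsIndep ↑(P i) →
      1 ≤ ∑ I ∈ 𝓘.filter (fun I => i ∈ I), x I) :
    G.Colorable (∑ I ∈ 𝓘, x I) := by
  classical
  have hcardα : Fintype.card (Σ J : {J // J ∈ 𝓘}, Fin (x J.1)) = ∑ I ∈ 𝓘, x I := by
    rw [Fintype.card_sigma]
    simp only [Fintype.card_fin]
    rw [Finset.univ_eq_attach]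
    exact Finset.sum_attach 𝓘 x
  have hA : ∀ i : Fin k,
      ((Finset.univ : Finset (Σ J : {J // J ∈ 𝓘}, Fin (x J.1))).filter
        (fun a => i ∈ (a.1 : Finset (Fin k)))).card
      = ∑ J ∈ 𝓘.filter (fun J => i ∈ J), x J := by
    intro i
    have hmap : ∀ a ∈ ((Finset.univ : Finset (Σ J : {J // J ∈ 𝓘}, Fin (x J.1))).filter
        (fun a => i ∈ (a.1 : Finset (Fin k)))),
        a.1 ∈ 𝓘.attach.filter (fun J => i ∈ J.1) := by
      intro a ha
      rw [Finset.mem_filter]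
      exact ⟨Finset.mem_attach _ _, (Finset.mem_filter.mp ha).2⟩
    have hsplit := Finset.card_eq_sum_card_fiberwise (f := Sigma.fst) hmap
    rw [hsplit]
    have hfibeq : ∀ J ∈ 𝓘.attach.filter (fun J => i ∈ J.1),
        (((Finset.univ : Finset (Σ J : {J // J ∈ 𝓘}, Fin (x J.1))).filter
          (fun a => i ∈ (a.1 : Finset (Fin k)))).filter (fun a => a.1 = J)).card
        = x J.1 := by
      intro J hJ
      have hiJ : i ∈ J.1 := (Finset.mem_filter.mp hJ).2
      have heqf : (((Finset.univ : Finset (Σ J : {J // J ∈ 𝓘}, Fin (x J.1))).filter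
          (fun a => i ∈ (a.1 : Finset (Fin k)))).filter (fun a => a.1 = J))
          = ((Finset.univ : Finset (Σ J : {J // J ∈ 𝓘}, Fin (x J.1))).filter
            (fun a => a.1 = J)) := by
        ext a
        simp only [Finset.mem_filter, Finset.mem_univ, true_and]
        constructor
        · exact fun h => h.2
        · intro h
          exact ⟨h ▸ hiJ, h⟩
      rw [heqf]
      exact card_sigma_fiber 𝓘 x J
    rw [Finset.sum_congr rfl hfibeq]
    rw [Finset.sum_filter, Finset.sum_attach 𝓘 (fun J => if i ∈ J then x J else 0),
      ← Finset.sum_filter]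
  have hg : ∀ i : Fin k, ∃ g : {v // v ∈ P i} → (Σ J : {J // J ∈ 𝓘}, Fin (x J.1)),
      (∀ w, i ∈ ((g w).1 : Finset (Fin k))) ∧
      (G.IsClique ↑(P i) → Function.Injective g) := by
    intro i
    by_cases hc : G.IsClique ↑(P i)
    · have hcard : Fintype.card {v // v ∈ P i} ≤
          ((Finset.univ : Finset (Σ J : {J // J ∈ 𝓘}, Fin (x J.1))).filter
            (fun a => i ∈ (a.1 : Finset (Fin k)))).card := by
        rw [Fintype.card_coe, hA i]
        exact hcl i hc
      obtain ⟨e, hrange⟩ := Function.Embedding.exists_of_card_le_finset hcard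
      refine ⟨fun w => e w, fun w => ?_, fun _ => e.injective⟩
      have hmemf : e w ∈ ((Finset.univ : Finset (Σ J : {J // J ∈ 𝓘}, Fin (x J.1))).filter
          (fun a => i ∈ (a.1 : Finset (Fin k)))) :=
        Finset.mem_coe.mp (hrange (Set.mem_range_self w))
      exact (Finset.mem_filter.mp hmemf).2
    · have h1 : 1 ≤ ∑ J ∈ 𝓘.filter (fun J => i ∈ J), x J :=
        hidp i ((hcliqueIndep i).resolve_left hc)
      have hnonempty : ((Finset.univ : Finset (Σ J : {J // J ∈ 𝓘}, Fin (x J.1))).filter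
          (fun a => i ∈ (a.1 : Finset (Fin k)))).Nonempty := by
        rw [← Finset.card_pos, hA i]
        omega
      obtain ⟨a₀, ha₀⟩ := hnonempty
      exact ⟨fun _ => a₀, fun _ => (Finset.mem_filter.mp ha₀).2,
        fun h => absurd h hc⟩
  choose g hg1 hg2 using hg
  have hmem : ∀ v : V, v ∈ P ((hpart v).choose) := fun v => (hpart v).choose_spec.1
  set pt : V → Fin k := fun v => (hpart v).choose with hptdef
  set f : V → (Σ J : {J // J ∈ 𝓘}, Fin (x J.1)) :=
    fun v => g (pt v) ⟨v, hmem v⟩ with hfdef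
  have key : ∀ (v : V) (i : Fin k) (hv : v ∈ P i), pt v = i →
      f v = g i ⟨v, hv⟩ := by
    intro v i hv h
    subst h
    rfl
  have hvalid : ∀ {u v : V}, G.Adj u v → f u ≠ f v := by
    intro u v hadj hfeq
    by_cases hij : pt u = pt v
    · have hvu : v ∈ P (pt u) := hij ▸ hmem v
      have hnev : u ≠ v := G.ne_of_adj hadj
      have hclq : G.IsClique ↑(P (pt u)) := by
        rcases hcliqueIndep (pt u) with h | h
        · exact h
        · exact absurd hadj (h (Finset.mem_coe.mpr (hmem u))
            (Finset.mem_coe.mpr hvu) hnev)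
      have hfv : f v = g (pt u) ⟨v, hvu⟩ := key v (pt u) hvu hij.symm
      have hfu : f u = g (pt u) ⟨u, hmem u⟩ := rfl
      rw [hfu, hfv] at hfeq
      exact hnev (congrArg Subtype.val (hg2 (pt u) hclq hfeq))
    · have hTadj : (typeGraph G P).Adj (pt u) (pt v) :=
        ⟨hij, (hhom (pt u) (pt v) hij).resolve_right
          (fun h => h u (hmem u) v (hmem v) hadj)⟩
      have h1 : pt u ∈ ((f u).1 : Finset (Fin k)) := hg1 (pt u) ⟨u, hmem u⟩
      have h2 : pt v ∈ ((f v).1 : Finset (Fin k)) := hg1 (pt v) ⟨v, hmem v⟩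
      have h2' : pt v ∈ ((f u).1 : Finset (Fin k)) := by
        rw [hfeq]; exact h2
      have hJindep : (typeGraph G P).IsIndep ↑((f u).1 : Finset (Fin k)) :=
        hind _ (f u).1.2
      exact hJindep (Finset.mem_coe.mpr h1) (Finset.mem_coe.mpr h2') hij hTadj
  have C : G.Coloring (Σ J : {J // J ∈ 𝓘}, Fin (x J.1)) :=
    SimpleGraph.Coloring.mk f (fun hadj => hvalid hadj)
  have hcol := C.colorable
  rwa [hcardα] at hcol

/-- Let `G` have an nd-decomposition `P_1, …, P_k` with all parts nonempty, with type
graph `T` and family `𝓘` of maximal independent sets of `T`.  Then `χ(G)` equals the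
minimum of `Σ_I x I` over all `x : 𝓘 → ℕ` satisfying the covering constraints
(`Σ_{I ∋ i} x I ≥ |P i|` for clique parts and `Σ_{I ∋ i} x I ≥ 1` for
independent-set parts). -/
theorem chromaticNumber_eq_min_covering {V : Type*} [Fintype V] (G : SimpleGraph V)
    (k : ℕ) (P : Fin k → Finset V)
    (hpart : ∀ v : V, ∃! i : Fin k, v ∈ P i)
    (hne : ∀ i : Fin k, (P i).Nonempty)
    (hcliqueIndep : ∀ i : Fin k, G.IsClique ↑(P i) ∨ G.IsIndep ↑(P i))
    (hhom : ∀ i j : Fin k, i ≠ j →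
      (∀ u ∈ P i, ∀ v ∈ P j, G.Adj u v) ∨ (∀ u ∈ P i, ∀ v ∈ P j, ¬ G.Adj u v)) :
    ∃ n : ℕ, G.chromaticNumber = (n : ℕ∞) ∧
      IsLeast {m : ℕ | ∃ x : Finset (Fin k) → ℕ,
        (∀ i : Fin k, G.IsClique ↑(P i) →
          (P i).card ≤ ∑ I ∈ (maxIndepSets (typeGraph G P)).filter (fun I => i ∈ I), x I) ∧
        (∀ i : Fin k, G.IsIndep ↑(P i) →
          1 ≤ ∑ I ∈ (maxIndepSets (typeGraph G P)).filter (fun I => i ∈ I), x I) ∧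
        m = ∑ I ∈ maxIndepSets (typeGraph G P), x I} n := by
  classical
  have hext : ∀ I : Finset (Fin k), (typeGraph G P).IsIndep ↑I →
      ∃ J ∈ maxIndepSets (typeGraph G P), I ⊆ J :=
    fun I hI => exists_maxIndep_superset _ I hI
  have hind : ∀ J ∈ maxIndepSets (typeGraph G P), (typeGraph G P).IsIndep ↑J := by
    intro J hJ
    rw [maxIndepSets, Finset.mem_filter] at hJ
    exact hJ.2.1
  have claimA : ∀ n : ℕ, G.Colorable n → ∃ x : Finset (Fin k) → ℕ,
      (∀ i : Fin k, G.IsClique ↑(P i) →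
        (P i).card ≤ ∑ I ∈ (maxIndepSets (typeGraph G P)).filter (fun I => i ∈ I), x I) ∧
      (∀ i : Fin k, G.IsIndep ↑(P i) →
        1 ≤ ∑ I ∈ (maxIndepSets (typeGraph G P)).filter (fun I => i ∈ I), x I) ∧
      n = ∑ I ∈ maxIndepSets (typeGraph G P), x I := by
    intro n hn
    obtain ⟨C⟩ := hn
    exact covering_of_coloring G P hne _ hext n C
  have hSne : ∃ m : ℕ, m ∈ {m : ℕ | ∃ x : Finset (Fin k) → ℕ,
      (∀ i : Fin k, G.IsClique ↑(P i) →
        (P i).card ≤ ∑ I ∈ (maxIndepSets (typeGraph G P)).filter (fun I => i ∈ I), x I) ∧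
      (∀ i : Fin k, G.IsIndep ↑(P i) →
        1 ≤ ∑ I ∈ (maxIndepSets (typeGraph G P)).filter (fun I => i ∈ I), x I) ∧
      m = ∑ I ∈ maxIndepSets (typeGraph G P), x I} := by
    obtain ⟨x, h1, h2, h3⟩ := claimA (Fintype.card V) G.colorable_of_fintype
    exact ⟨_, x, h1, h2, h3⟩
  refine ⟨Nat.find hSne, ?_, Nat.find_spec hSne, fun m hm => Nat.find_min' hSne hm⟩
  have hχle : G.chromaticNumber ≤ (Nat.find hSne : ℕ∞) := by
    obtain ⟨x, h1, h2, h3⟩ := Nat.find_spec hSne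
    have hcb := colorable_of_covering G P hpart hcliqueIndep hhom _ hind x h1 h2
    rw [← h3] at hcb
    exact hcb.chromaticNumber_le
  have hfin : G.chromaticNumber ≠ ⊤ :=
    ne_top_of_le_ne_top (by simp) G.colorable_of_fintype.chromaticNumber_le
  set nχ := (G.chromaticNumber).toNat with hnχdef
  have hnχ : G.chromaticNumber = (nχ : ℕ∞) := (ENat.coe_toNat hfin).symm
  have hcolχ : G.Colorable nχ :=
    SimpleGraph.chromaticNumber_le_iff_colorable.mp (le_of_eq hnχ)
  obtain ⟨x, h1, h2, h3⟩ := claimA nχ hcolχ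
  have hle : Nat.find hSne ≤ nχ := Nat.find_min' hSne ⟨x, h1, h2, h3⟩
  have hge : nχ ≤ Nat.find hSne := by
    have h := hχle
    rw [hnχ] at h
    exact_mod_cast h
  rw [hnχ]
  exact_mod_cast (le_antisymm hge hle)
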